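/- (Lemma 6(i), a line and a conic.) Let P_1 ∈ K[X_0, X_1, X_2] be a nonzero linear form defining a line D_1 in P^2(K), and let P_2 ∈ K[X_0, X_1, X_2] be homogeneous of degree 2 defining a nonsingular conic D_2. Then there exists a non-constant analytic map from K to P^2(K) omitting both D_1 and D_2; i.e., P^2(K) \ (D_1 ∪ D_2) is not K-hyperbolic. -/

import Mathlib

open MvPolynomial

section
open Module Submodule
variable {K : Type*} [Field K]


private lemma fin3sum (d : Fin 3 →₀ ℕ) : d.degree = d 0 + d 1 + d 2 := by
  rw [Finsupp.degree_apply, Finset.sum_subset (Finset.subset_univ d.support)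
    (fun i _ hi => Finsupp.notMem_support_iff.mp hi)]
  exact Fin.sum_univ_three d

private noncomputable def E3 (a b c : ℕ) : Fin 3 →₀ ℕ :=
  Finsupp.single 0 a + Finsupp.single 1 b + Finsupp.single 2 c

private lemma eq_d_iff (a b c : ℕ) (d : Fin 3 →₀ ℕ) :
    (E3 a b c = d) ↔ (d 0 = a ∧ d 1 = b ∧ d 2 = c) := by
  constructor
  · intro h
    refine ⟨?_, ?_, ?_⟩ <;> (rw [← h]; simp [E3, Finsupp.single_apply])
  · rintro ⟨h0, h1, h2⟩
    exact Finsupp.ext fun j => by fin_cases j <;> simp [E3, Finsupp.single_apply, h0, h1, h2]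

private lemma E3_a0 (a b c : ℕ) : (E3 a b c) 0 = a := by simp [E3, Finsupp.single_apply]
private lemma E3_a1 (a b c : ℕ) : (E3 a b c) 1 = b := by simp [E3, Finsupp.single_apply]
private lemma E3_a2 (a b c : ℕ) : (E3 a b c) 2 = c := by simp [E3, Finsupp.single_apply]

private lemma d_deg (d : Fin 3 →₀ ℕ) {n : ℕ} (h : ¬ (d 0 + d 1 + d 2 = n)) : d.degree ≠ n := by
  rw [fin3sum]; exact h

private lemma homog1_eq {P : MvPolynomial (Fin 3) K} (h : P.IsHomogeneous 1) :
    P = monomial (E3 1 0 0) (coeff (E3 1 0 0) P) + monomial (E3 0 1 0) (coeff (E3 0 1 0) P)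
      + monomial (E3 0 0 1) (coeff (E3 0 0 1) P) := by
  ext d
  by_cases hdeg : d 0 + d 1 + d 2 = 1
  · have hc : (d 0 = 1 ∧ d 1 = 0 ∧ d 2 = 0) ∨ (d 0 = 0 ∧ d 1 = 1 ∧ d 2 = 0)
        ∨ (d 0 = 0 ∧ d 1 = 0 ∧ d 2 = 1) := by omega
    rcases hc with ⟨e0, e1, e2⟩ | ⟨e0, e1, e2⟩ | ⟨e0, e1, e2⟩ <;>
      (rw [← (eq_d_iff _ _ _ d).mpr ⟨e0, e1, e2⟩]
       simp [coeff_monomial, eq_d_iff, E3_a0, E3_a1, E3_a2])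
  · simp only [coeff_add, coeff_monomial, eq_d_iff]
    rw [if_neg (by omega), if_neg (by omega), if_neg (by omega),
      h.coeff_eq_zero (d_deg d (by omega))]
    simp

private lemma homog2_eq {P : MvPolynomial (Fin 3) K} (h : P.IsHomogeneous 2) :
    P = monomial (E3 2 0 0) (coeff (E3 2 0 0) P) + monomial (E3 0 2 0) (coeff (E3 0 2 0) P)
      + monomial (E3 0 0 2) (coeff (E3 0 0 2) P) + monomial (E3 1 1 0) (coeff (E3 1 1 0) P)
      + monomial (E3 1 0 1) (coeff (E3 1 0 1) P) + monomial (E3 0 1 1) (coeff (E3 0 1 1) P) := by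
  ext d
  by_cases hdeg : d 0 + d 1 + d 2 = 2
  · have hc : (d 0 = 2 ∧ d 1 = 0 ∧ d 2 = 0) ∨ (d 0 = 0 ∧ d 1 = 2 ∧ d 2 = 0)
        ∨ (d 0 = 0 ∧ d 1 = 0 ∧ d 2 = 2) ∨ (d 0 = 1 ∧ d 1 = 1 ∧ d 2 = 0)
        ∨ (d 0 = 1 ∧ d 1 = 0 ∧ d 2 = 1) ∨ (d 0 = 0 ∧ d 1 = 1 ∧ d 2 = 1) := by omega
    rcases hc with ⟨e0, e1, e2⟩ | ⟨e0, e1, e2⟩ | ⟨e0, e1, e2⟩ | ⟨e0, e1, e2⟩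
        | ⟨e0, e1, e2⟩ | ⟨e0, e1, e2⟩ <;>
      (rw [← (eq_d_iff _ _ _ d).mpr ⟨e0, e1, e2⟩]
       simp [coeff_monomial, eq_d_iff, E3_a0, E3_a1, E3_a2])
  · simp only [coeff_add, coeff_monomial, eq_d_iff]
    rw [if_neg (by omega), if_neg (by omega), if_neg (by omega), if_neg (by omega),
      if_neg (by omega), if_neg (by omega), h.coeff_eq_zero (d_deg d (by omega))]
    simp

private lemma mono_eq (k : K) (a b c : ℕ) :
    (monomial (E3 a b c) k : MvPolynomial (Fin 3) K) = C k * X 0 ^ a * X 1 ^ b * X 2 ^ c := by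
  rw [E3, C_apply, X_pow_eq_monomial, X_pow_eq_monomial, X_pow_eq_monomial,
    monomial_mul, monomial_mul, monomial_mul]
  simp


private def Qf (co : Fin 6 → K) (x : Fin 3 → K) : K :=
  co 0 * x 0 ^ 2 + co 1 * x 1 ^ 2 + co 2 * x 2 ^ 2
    + co 3 * x 0 * x 1 + co 4 * x 0 * x 2 + co 5 * x 1 * x 2

private def gradf (co : Fin 6 → K) (x : Fin 3 → K) : Fin 3 → K :=
  ![2 * co 0 * x 0 + co 3 * x 1 + co 4 * x 2,
    co 3 * x 0 + 2 * co 1 * x 1 + co 5 * x 2,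
    co 4 * x 0 + co 5 * x 1 + 2 * co 2 * x 2]

private noncomputable def co2 (P : MvPolynomial (Fin 3) K) : Fin 6 → K :=
  ![coeff (E3 2 0 0) P, coeff (E3 0 2 0) P, coeff (E3 0 0 2) P,
    coeff (E3 1 1 0) P, coeff (E3 1 0 1) P, coeff (E3 0 1 1) P]

private lemma co2_0 (P : MvPolynomial (Fin 3) K) : co2 P 0 = coeff (E3 2 0 0) P := rfl
private lemma co2_1 (P : MvPolynomial (Fin 3) K) : co2 P 1 = coeff (E3 0 2 0) P := rfl
private lemma co2_2 (P : MvPolynomial (Fin 3) K) : co2 P 2 = coeff (E3 0 0 2) P := rfl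
private lemma co2_3 (P : MvPolynomial (Fin 3) K) : co2 P 3 = coeff (E3 1 1 0) P := rfl
private lemma co2_4 (P : MvPolynomial (Fin 3) K) : co2 P 4 = coeff (E3 1 0 1) P := rfl
private lemma co2_5 (P : MvPolynomial (Fin 3) K) : co2 P 5 = coeff (E3 0 1 1) P := rfl

private def Lf (l : Fin 3 → K) (x : Fin 3 → K) : K := l 0 * x 0 + l 1 * x 1 + l 2 * x 2

private noncomputable def co1 (P : MvPolynomial (Fin 3) K) : Fin 3 → K :=
  ![coeff (E3 1 0 0) P, coeff (E3 0 1 0) P, coeff (E3 0 0 1) P]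


private lemma eval_eq_Qf {P : MvPolynomial (Fin 3) K} (h : P.IsHomogeneous 2) (x : Fin 3 → K) :
    eval x P = Qf (co2 P) x := by
  conv_lhs => rw [homog2_eq h]
  simp only [mono_eq, map_add, eval_mul, eval_pow, eval_C, eval_X]
  simp only [Qf, co2_0, co2_1, co2_2, co2_3, co2_4, co2_5]
  ring

private lemma eval_pderiv_eq {P : MvPolynomial (Fin 3) K} (h : P.IsHomogeneous 2) (x : Fin 3 → K)
    (j : Fin 3) : eval x (pderiv j P) = gradf (co2 P) x j := by
  conv_lhs => rw [homog2_eq h]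
  fin_cases j <;>
    · simp only [mono_eq, map_add, pderiv_mul, pderiv_pow, pderiv_C, pderiv_X]
      simp only [map_add, eval_mul, eval_pow, eval_add, eval_C, eval_X, eval_zero,
        Pi.single_apply, gradf, co2_0, co2_1, co2_2, co2_3, co2_4, co2_5,
        Matrix.cons_val_zero, Matrix.cons_val_one, Matrix.head_cons, Matrix.cons_val_two,
        Matrix.tail_cons]
      norm_num [Fin.ext_iff]
      ring

private lemma eval_eq_Lf {P : MvPolynomial (Fin 3) K} (h : P.IsHomogeneous 1) (x : Fin 3 → K) :
    eval x P = Lf (co1 P) x := by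
  conv_lhs => rw [homog1_eq h]
  simp only [mono_eq, map_add, eval_mul, eval_pow, eval_C, eval_X]
  show _ = Lf ![coeff (E3 1 0 0) P, coeff (E3 0 1 0) P, coeff (E3 0 0 1) P] x
  simp only [Lf, Matrix.cons_val_zero, Matrix.cons_val_one, Matrix.head_cons, Matrix.cons_val_two,
    Matrix.tail_cons]
  ring




private def Bf (co : Fin 6 → K) (x y : Fin 3 → K) : K :=
  (2 * co 0 * x 0 + co 3 * x 1 + co 4 * x 2) * y 0
    + (co 3 * x 0 + 2 * co 1 * x 1 + co 5 * x 2) * y 1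
    + (co 4 * x 0 + co 5 * x 1 + 2 * co 2 * x 2) * y 2


private noncomputable def lfun (m : Fin 3 → K) : (Fin 3 → K) →ₗ[K] K where
  toFun x := m 0 * x 0 + m 1 * x 1 + m 2 * x 2
  map_add' x y := by simp only [Pi.add_apply]; ring
  map_smul' c x := by simp only [Pi.smul_apply, smul_eq_mul, RingHom.id_apply]; ring

private lemma lfun_apply (m x : Fin 3 → K) : lfun m x = m 0 * x 0 + m 1 * x 1 + m 2 * x 2 := rfl

private lemma lfun_gradf (co : Fin 6 → K) (x y : Fin 3 → K) :
    lfun (gradf co x) y = Bf co x y := by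
  simp [lfun_apply, gradf, Bf]

private lemma lfun_Lf (l x : Fin 3 → K) : lfun l x = Lf l x := rfl

-- ring identities
private lemma I1 (co : Fin 6 → K) (x y : Fin 3 → K) (s t : K) :
    Qf co (fun i => s * x i + t * y i)
      = s ^ 2 * Qf co x + s * t * Bf co x y + t ^ 2 * Qf co y := by
  simp only [Qf, Bf]; ring

private lemma I2 (co : Fin 6 → K) (x y : Fin 3 → K) : Bf co x y = Bf co y x := by
  simp only [Bf]; ring

private lemma I3 (co : Fin 6 → K) (x y z : Fin 3 → K) (s t : K) :
    Bf co (fun i => s * x i + t * y i) z = s * Bf co x z + t * Bf co y z := by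
  simp only [Bf]; ring

private lemma I4 (co : Fin 6 → K) (x : Fin 3 → K) : Bf co x x = 2 * Qf co x := by
  simp only [Qf, Bf]; ring

private lemma I5 (co : Fin 6 → K) (q v w : Fin 3 → K) (α z : K) :
    Qf co (fun i => α * q i + z * v i + w i)
      = α ^ 2 * Qf co q + z ^ 2 * Qf co v + Qf co w
        + α * z * Bf co q v + α * Bf co q w + z * Bf co v w := by
  simp only [Qf, Bf]; ring

private lemma I6 (l : Fin 3 → K) (q v w : Fin 3 → K) (α z : K) :
    Lf l (fun i => α * q i + z * v i + w i) = α * Lf l q + z * Lf l v + Lf l w := by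
  simp only [Lf]; ring

private lemma I7 (l : Fin 3 → K) (x y : Fin 3 → K) (s t : K) :
    Lf l (fun i => s * x i + t * y i) = s * Lf l x + t * Lf l y := by
  simp only [Lf]; ring

-- linear algebra (proved in t5)
private lemma lfun_ne_zero {m : Fin 3 → K} (hm : m ≠ 0) : lfun m ≠ 0 := by
  intro h
  apply hm
  funext j
  have hj := DFunLike.congr_fun h (Pi.single j (1 : K))
  fin_cases j <;> simpa [lfun_apply, Pi.single_apply] using hj

private lemma finrank_ker_lfun {m : Fin 3 → K} (hm : m ≠ 0) :
    finrank K (LinearMap.ker (lfun m)) = 2 := by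
  have h := Module.Dual.finrank_ker_add_one_of_ne_zero (f := lfun m) (lfun_ne_zero hm)
  have h3 : finrank K (Fin 3 → K) = 3 := by simp
  omega

private lemma exists_ker_ne_zero {m : Fin 3 → K} (hm : m ≠ 0) :
    ∃ u, lfun m u = 0 ∧ u ≠ 0 := by
  have h2 := finrank_ker_lfun hm
  have : LinearMap.ker (lfun m) ≠ ⊥ := by
    intro hb; rw [hb] at h2; simp at h2
  obtain ⟨u, hu, hu0⟩ := Submodule.exists_mem_ne_zero_of_ne_bot this
  exact ⟨u, hu, hu0⟩

private lemma span_singleton_finrank_le (q : Fin 3 → K) : finrank K (span K {q}) ≤ 1 := by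
  by_cases hq : q = 0
  · subst hq; rw [span_zero_singleton]; simp
  · rw [finrank_span_singleton hq]

private lemma exists_ker_not_span {m : Fin 3 → K} (hm : m ≠ 0) (q : Fin 3 → K) :
    ∃ v, lfun m v = 0 ∧ v ∉ span K {q} := by
  by_contra hcon
  push_neg at hcon
  have hle : LinearMap.ker (lfun m) ≤ span K {q} := fun x hx => hcon x hx
  have := Submodule.finrank_mono hle
  have := span_singleton_finrank_le q
  have := finrank_ker_lfun hm
  omega

private lemma ker_eq_span_pair {m q v : Fin 3 → K} (hm : m ≠ 0) (hq : lfun m q = 0)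
    (hv : lfun m v = 0) (hq0 : q ≠ 0) (hvs : v ∉ span K {q}) :
    LinearMap.ker (lfun m) = span K {q, v} := by
  have hk2 := finrank_ker_lfun hm
  have hle : span K {q, v} ≤ LinearMap.ker (lfun m) := by
    rw [span_le]
    rintro x (rfl | rfl)
    · exact hq
    · exact hv
  have hlt : span K {q} < span K {q, v} := by
    refine lt_of_le_of_ne (span_mono (Set.singleton_subset_iff.mpr (by simp))) ?_
    intro he
    exact hvs (he ▸ subset_span (by simp))
  have h1 : finrank K (span K {q}) = 1 := finrank_span_singleton hq0
  have hgt := Submodule.finrank_lt_finrank_of_lt hlt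
  exact (Submodule.eq_of_le_of_finrank_le hle (by omega)).symm

private lemma exists_not_span_pair (q v : Fin 3 → K) : ∃ w, w ∉ span K {q, v} := by
  by_contra hcon
  push_neg at hcon
  have htop : span K ({q, v} : Set (Fin 3 → K)) = ⊤ := eq_top_iff'.mpr hcon
  have h3 : finrank K (Fin 3 → K) = 3 := by simp
  have hfin : finrank K (span K ({q, v} : Set (Fin 3 → K))) ≤ 2 := by
    rw [Submodule.span_insert]
    have := Submodule.finrank_sup_add_finrank_inf_eq (span K {q}) (span K {v})
    have := span_singleton_finrank_le q
    have := span_singleton_finrank_le v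
    omega
  rw [htop, finrank_top, h3] at hfin
  omega

private lemma comb_ne_zero {q v : Fin 3 → K} (hq0 : q ≠ 0) (hvs : v ∉ span K {q}) {s t : K}
    (hst : ¬(s = 0 ∧ t = 0)) : (fun i => s * q i + t * v i) ≠ 0 := by
  intro h
  by_cases ht : t = 0
  · have hs : s ≠ 0 := fun hs => hst ⟨hs, ht⟩
    apply hq0
    funext i
    have hi := congrFun h i
    simp only [ht, zero_mul, add_zero, Pi.zero_apply] at hi
    exact (mul_eq_zero.mp hi).resolve_left hs
  · apply hvs
    rw [mem_span_singleton]
    refine ⟨-(s / t), funext fun i => ?_⟩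
    have hi := congrFun h i
    simp only [Pi.zero_apply] at hi
    simp only [Pi.smul_apply, smul_eq_mul]
    field_simp
    linear_combination -hi

private lemma mem_span_pair' {q v x : Fin 3 → K} (s t : K)
    (h : ∀ i, x i = s * q i + t * v i) : x ∈ span K {q, v} := by
  rw [Submodule.mem_span_pair]
  exact ⟨s, t, funext fun i => by simp [Pi.smul_apply, smul_eq_mul, (h i).symm]⟩

private lemma quad_root [IsAlgClosed K] (A B C' : K) :
    ∃ s t : K, ¬(s = 0 ∧ t = 0) ∧ A * s ^ 2 + B * s * t + C' * t ^ 2 = 0 := by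
  by_cases hA : A = 0
  · exact ⟨1, 0, by simp, by simp [hA]⟩
  · obtain ⟨r, hr⟩ := IsAlgClosed.exists_root
      (Polynomial.C A * Polynomial.X ^ 2 + Polynomial.C B * Polynomial.X + Polynomial.C C')
      (by rw [Polynomial.degree_quadratic hA]; exact two_ne_zero)
    refine ⟨r, 1, by simp, ?_⟩
    have := hr
    simp only [Polynomial.IsRoot, Polynomial.eval_add, Polynomial.eval_mul, Polynomial.eval_pow,
      Polynomial.eval_C, Polynomial.eval_X] at this
    linear_combination this

private theorem core {K : Type*} [Field K] [IsAlgClosed K] (co : Fin 6 → K) (l : Fin 3 → K)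
    (hl : l ≠ 0)
    (hns : ∀ x : Fin 3 → K, x ≠ 0 → Qf co x = 0 → gradf co x ≠ 0) :
    ∃ u v w : Fin 3 → K,
      (∀ z : K, (fun i => u i * z ^ 2 + v i * z + w i) ≠ 0) ∧
      (∀ z : K, Lf l (fun i => u i * z ^ 2 + v i * z + w i) ≠ 0) ∧
      (∀ z : K, Qf co (fun i => u i * z ^ 2 + v i * z + w i) ≠ 0) ∧
      ¬ (∀ z z' : K, ∃ c : K, c ≠ 0 ∧ ∀ i,
          u i * z ^ 2 + v i * z + w i = c * (u i * z' ^ 2 + v i * z' + w i)) := by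
  classical
  -- Step 1: find q ≠ 0 with Lf l q = 0 and Qf co q = 0
  obtain ⟨u1, hu1k, hu10⟩ := exists_ker_ne_zero hl
  obtain ⟨u2, hu2k, hu2s⟩ := exists_ker_not_span hl u1
  obtain ⟨s₀, t₀, hst, hroot⟩ := quad_root (Qf co u1) (Bf co u1 u2) (Qf co u2)
  set q : Fin 3 → K := fun i => s₀ * u1 i + t₀ * u2 i with hqdef
  have hq0 : q ≠ 0 := comb_ne_zero hu10 hu2s hst
  have hLq : Lf l q = 0 := by
    rw [hqdef, I7, ← lfun_Lf, ← lfun_Lf, hu1k, hu2k]; ring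
  have hQq : Qf co q = 0 := by rw [hqdef, I1]; linear_combination hroot
  -- Step 2: gradient at q, and v
  have hgq : gradf co q ≠ 0 := hns q hq0 hQq
  obtain ⟨v, hvk, hvs⟩ := exists_ker_not_span hgq q
  have hBqv : Bf co q v = 0 := by rw [← lfun_gradf]; exact hvk
  have hBqq : Bf co q q = 0 := by rw [I4, hQq]; ring
  obtain ⟨w, hw⟩ := exists_not_span_pair q v
  -- Step 3: Qf co v ≠ 0
  have hQv : Qf co v ≠ 0 := by
    intro hQv
    have key : ∀ s t : K, ¬(s = 0 ∧ t = 0) → Bf co (fun i => s * q i + t * v i) w = 0 → False := by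
      intro s t hst0 hB3
      set x₀ : Fin 3 → K := fun i => s * q i + t * v i with hx₀
      have hx00 : x₀ ≠ 0 := comb_ne_zero hq0 hvs hst0
      have hQx0 : Qf co x₀ = 0 := by
        rw [hx₀, I1, hQq, hQv, hBqv]; ring
      have hgx : gradf co x₀ ≠ 0 := hns x₀ hx00 hQx0
      have hB1 : Bf co x₀ q = 0 := by
        rw [hx₀, I3, hBqq, I2 co v q, hBqv]; ring
      have hB2 : Bf co x₀ v = 0 := by
        rw [hx₀, I3, hBqv, I4, hQv]; ring
      have hker := ker_eq_span_pair hgx (by rw [lfun_gradf]; exact hB1)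
        (by rw [lfun_gradf]; exact hB2) hq0 hvs
      apply hw
      rw [← hker, LinearMap.mem_ker, lfun_gradf]
      exact hB3
    by_cases hbw : Bf co q w = 0 ∧ Bf co v w = 0
    · exact key 1 0 (by simp) (by rw [I3, hbw.1, hbw.2]; ring)
    · refine key (Bf co v w) (-(Bf co q w)) ?_ ?_
      · intro ⟨h1, h2⟩
        exact hbw ⟨by linear_combination -h2, h1⟩
      · rw [I3]; ring
  -- case split on Lf l v
  by_cases hLv : Lf l v = 0
  · -- tangent case: conic through q
    have hLw : Lf l w ≠ 0 := by
      intro hLw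
      have hker := ker_eq_span_pair hl (by rw [lfun_Lf]; exact hLq)
        (by rw [lfun_Lf]; exact hLv) hq0 hvs
      exact hw (by rw [← hker, LinearMap.mem_ker, lfun_Lf]; exact hLw)
    have he : Bf co q w ≠ 0 := by
      intro he
      have hker := ker_eq_span_pair hgq (by rw [lfun_gradf]; exact hBqq)
        (by rw [lfun_gradf]; exact hBqv) hq0 hvs
      exact hw (by rw [← hker, LinearMap.mem_ker, lfun_gradf]; exact he)
    set e := Bf co q w with hedef
    set c2 := Qf co v with hc2def
    set bvw := Bf co v w with hbvwdef
    set qw := Qf co w with hqwdef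
    set αf : K → K := fun z => (1 - qw - bvw * z - c2 * z ^ 2) / e with hαdef
    refine ⟨fun i => -(c2 / e) * q i, fun i => v i + -(bvw / e) * q i,
      fun i => w i + (1 - qw) / e * q i, ?_, ?_, ?_, ?_⟩
    all_goals
      have hffull : ∀ z : K, (fun i => (-(c2 / e) * q i) * z ^ 2 + (v i + -(bvw / e) * q i) * z
          + (w i + (1 - qw) / e * q i)) = (fun i => αf z * q i + z * v i + w i) := by
        intro z
        funext i
        rw [hαdef]
        field_simp
        ring
    · -- nonvanishing of the map
      intro z h
      apply hw
      have : ∀ i, w i = -(αf z) * q i + -z * v i := by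
        intro i
        have hi := congrFun (hffull z ▸ h) i
        simp only [Pi.zero_apply] at hi
        linear_combination hi
      exact mem_span_pair' (-(αf z)) (-z) this
    · -- line omitted
      intro z
      rw [hffull z, I6, hLq, hLv]
      simpa using hLw
    · -- conic omitted
      intro z
      rw [hffull z, I5, hQq, hBqv, ← hc2def, ← hqwdef, ← hedef, ← hbvwdef]
      have : αf z * e = 1 - qw - bvw * z - c2 * z ^ 2 := by
        rw [hαdef]; field_simp
      intro hzero
      apply one_ne_zero (α := K)
      linear_combination hzero - this
    · -- nonconstant
      intro hcon
      obtain ⟨c, hc0, hcz⟩ := hcon 1 0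
      have h1 : ∀ i, αf 1 * q i + 1 * v i + w i = c * (αf 0 * q i + 0 * v i + w i) := by
        intro i
        have e1 := congrFun (hffull 1) i
        have e0 := congrFun (hffull 0) i
        calc αf 1 * q i + 1 * v i + w i
            = (-(c2 / e) * q i) * 1 ^ 2 + (v i + -(bvw / e) * q i) * 1
              + (w i + (1 - qw) / e * q i) := by rw [e1]
          _ = c * ((-(c2 / e) * q i) * 0 ^ 2 + (v i + -(bvw / e) * q i) * 0
              + (w i + (1 - qw) / e * q i)) := by rw [hcz i]
          _ = c * (αf 0 * q i + 0 * v i + w i) := by rw [e0]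
      by_cases hc1 : c = 1
      · apply hvs
        rw [mem_span_singleton]
        refine ⟨c * αf 0 - αf 1, funext fun i => ?_⟩
        have := h1 i
        rw [hc1] at this ⊢
        simp only [Pi.smul_apply, smul_eq_mul]
        linear_combination -this
      · apply hw
        have hne : c - 1 ≠ 0 := fun h' => hc1 (by linear_combination h')
        refine mem_span_pair' ((c - 1)⁻¹ * (αf 1 - c * αf 0)) ((c - 1)⁻¹) fun i => ?_
        have key : (c - 1) * w i = (αf 1 - c * αf 0) * q i + v i := by
          linear_combination -(h1 i)
        calc w i = (c - 1)⁻¹ * ((c - 1) * w i) := by rw [inv_mul_cancel_left₀ hne]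
          _ = (c - 1)⁻¹ * ((αf 1 - c * αf 0) * q i + v i) := by rw [key]
          _ = (c - 1)⁻¹ * (αf 1 - c * αf 0) * q i + (c - 1)⁻¹ * v i := by ring
  · -- transversal case: tangent line at q
    refine ⟨fun _ => 0, q, v, ?_, ?_, ?_, ?_⟩
    · intro z h
      have h' : (fun i => z * q i + 1 * v i) = 0 := by
        funext i
        have hi := congrFun h i
        simp only [Pi.zero_apply] at hi ⊢
        linear_combination hi
      exact comb_ne_zero hq0 hvs (by simp) h'
    · intro z
      have : Lf l (fun i => (fun _ => (0:K)) i * z ^ 2 + q i * z + v i)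
          = Lf l (fun i => z * q i + 1 * v i) := by
        congr 1; funext i; ring
      rw [this, I7, hLq]
      simpa using hLv
    · intro z
      have : Qf co (fun i => (fun _ => (0:K)) i * z ^ 2 + q i * z + v i)
          = Qf co (fun i => z * q i + 1 * v i) := by
        congr 1; funext i; ring
      rw [this, I1, hQq, hBqv]
      simpa using hQv
    · intro hcon
      obtain ⟨c, hc0, hcz⟩ := hcon 1 0
      by_cases hc1 : c = 1
      · apply hq0
        funext i
        have := hcz i
        rw [hc1] at this
        simp only [Pi.zero_apply]
        linear_combination this
      · apply hvs
        rw [mem_span_singleton]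
        have hne : c - 1 ≠ 0 := fun h' => hc1 (by linear_combination h')
        refine ⟨(c - 1)⁻¹, funext fun i => ?_⟩
        have key : (c - 1) * v i = q i := by linear_combination -(hcz i)
        simp only [Pi.smul_apply, smul_eq_mul]
        calc (c - 1)⁻¹ * q i = (c - 1)⁻¹ * ((c - 1) * v i) := by rw [key]
          _ = v i := by rw [inv_mul_cancel_left₀ hne]


end

section
variable {K : Type*} [Field K]

private lemma co1_0 (P : MvPolynomial (Fin 3) K) : co1 P 0 = coeff (E3 1 0 0) P := rfl
private lemma co1_1 (P : MvPolynomial (Fin 3) K) : co1 P 1 = coeff (E3 0 1 0) P := rfl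
private lemma co1_2 (P : MvPolynomial (Fin 3) K) : co1 P 2 = coeff (E3 0 0 1) P := rfl

end

/-- Lemma 6(i), a line and a conic: the complement in `P²(K)` of a line and a
nonsingular conic is not `K`-hyperbolic. -/
theorem line_and_conic_not_hyperbolic
    {K : Type*} [NontriviallyNormedField K] [CompleteSpace K] [IsAlgClosed K]
    [IsUltrametricDist K]
    (P₁ : MvPolynomial (Fin 3) K) (hP₁ : P₁.IsHomogeneous 1) (hP₁0 : P₁ ≠ 0)
    (P₂ : MvPolynomial (Fin 3) K) (hP₂ : P₂.IsHomogeneous 2)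
    (hns₂ : ∀ a : Fin 3 → K, a ≠ 0 → eval a P₂ = 0 →
      ∃ j, eval a (pderiv j P₂) ≠ 0) :
    ∃ f : Fin 3 → K → K,
      (∀ i, ∀ z : K, AnalyticAt K (f i) z) ∧
      (∀ z : K, ∃ i, f i z ≠ 0) ∧
      (∀ z : K, eval (fun i => f i z) P₁ ≠ 0) ∧
      (∀ z : K, eval (fun i => f i z) P₂ ≠ 0) ∧
      ¬ (∀ z w : K, ∃ c : K, c ≠ 0 ∧ ∀ i, f i z = c * f i w) := by
  classical
  have hl : co1 P₁ ≠ 0 := by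
    intro h
    apply hP₁0
    have h0 := congrFun h 0
    have h1 := congrFun h 1
    have h2 := congrFun h 2
    rw [co1_0, Pi.zero_apply] at h0
    rw [co1_1, Pi.zero_apply] at h1
    rw [co1_2, Pi.zero_apply] at h2
    rw [homog1_eq hP₁, h0, h1, h2]
    simp
  have hns : ∀ x : Fin 3 → K, x ≠ 0 → Qf (co2 P₂) x = 0 → gradf (co2 P₂) x ≠ 0 := by
    intro x hx hQ hg
    obtain ⟨j, hj⟩ := hns₂ x hx (by rw [eval_eq_Qf hP₂]; exact hQ)
    exact hj (by rw [eval_pderiv_eq hP₂, hg]; simp)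
  obtain ⟨u, v, w, hnz, hL, hQ, hnc⟩ := core (co2 P₂) (co1 P₁) hl hns
  refine ⟨fun i z => u i * z ^ 2 + v i * z + w i, ?_, ?_, ?_, ?_, ?_⟩
  · intro i z
    have hid : AnalyticAt K (fun z : K => z) z := analyticAt_id
    have : AnalyticAt K (fun z : K => u i * z ^ 2 + (v i * z + w i)) z :=
      (analyticAt_const.mul (hid.pow 2)).add
        ((analyticAt_const.mul hid).add analyticAt_const)
    simpa [add_assoc] using this
  · intro z
    exact Function.ne_iff.mp (hnz z)
  · intro z
    rw [eval_eq_Lf hP₁]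
    exact hL z
  · intro z
    rw [eval_eq_Qf hP₂]
    exact hQ z
  · exact hnc
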